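/- Two-piece decomposition of the per-sample subproblem: Fix b ≥ 0 and i ∈ [t]. Under the piecewise-concavity and sublinear-growth assumptions, S_i^{new}(b) = max_{1 ≤ k_1 < k_2 ≤ K} S_i^{new,(k_1,k_2)}(b), where S_i^{new,(k_1,k_2)}(b) := sup { α_{k_1} ℓ_{k_1}(ξ̂_i − v_{k_1}) + α_{k_2} ℓ_{k_2}(ξ̂_i − v_{k_2}) : α_{k_1} ‖v_{k_1}‖ + α_{k_2} ‖v_{k_2}‖ ≤ b, α_{k_1} + α_{k_2} = 1, α_{k_1}, α_{k_2} ≥ 0 }. -/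

import Mathlib

open MeasureTheory Filter
open scoped ENNReal NNReal BigOperators RealInnerProductSpace

set_option autoImplicit false

noncomputable section

/-- `Vec d` is Euclidean space `ℝ^d`. -/
abbrev Vec (d : ℕ) := EuclideanSpace ℝ (Fin d)


/-- Perspective-type term `α · h(ξ − q/α)`, with the liminf convention
`liminf_{α→0⁺} α · h(ξ − q/α)` at `α = 0` (which equals `0` when `q = 0`). -/
def persp {d : ℕ} (h : Vec d → ℝ) (ξ q : Vec d) (α : ℝ) : ℝ :=
  if 0 < α then α * h (ξ - α⁻¹ • q)
  else liminf (fun a : ℝ => a * h (ξ - a⁻¹ • q)) (nhdsWithin 0 (Set.Ioi 0))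

/-- The perspective formulation `S_i^{old}(b)` of the per-sample subproblem. -/
def Sold {d K : ℕ} (ℓk : Fin K → Vec d → ℝ) (ξ : Vec d) (b : ℝ) : ℝ :=
  sSup {v | ∃ (α : Fin K → ℝ) (q : Fin K → Vec d),
    (∀ k, 0 ≤ α k) ∧ ∑ k, α k = 1 ∧ ∑ k, ‖q k‖ ≤ b ∧
    v = ∑ k, persp (ℓk k) ξ (q k) (α k)}

/-- The budget formulation `S_i^{new}(b)` of the per-sample subproblem. -/
def Snew {d K : ℕ} (ℓk : Fin K → Vec d → ℝ) (ξ : Vec d) (b : ℝ) : ℝ :=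
  sSup {v | ∃ (α : Fin K → ℝ) (w : Fin K → Vec d),
    (∀ k, 0 ≤ α k) ∧ ∑ k, α k = 1 ∧ ∑ k, α k * ‖w k‖ ≤ b ∧
    v = ∑ k, α k * ℓk k (ξ - w k)}

/-- The two-piece budget subproblem `S_i^{new,(k₁,k₂)}(b)`. -/
def SnewPair {d : ℕ} (h₁ h₂ : Vec d → ℝ) (ξ : Vec d) (b : ℝ) : ℝ :=
  sSup {v | ∃ (α₁ α₂ : ℝ) (w₁ w₂ : Vec d),
    0 ≤ α₁ ∧ 0 ≤ α₂ ∧ α₁ + α₂ = 1 ∧ α₁ * ‖w₁‖ + α₂ * ‖w₂‖ ≤ b ∧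
    v = α₁ * h₁ (ξ - w₁) + α₂ * h₂ (ξ - w₂)}

set_option maxHeartbeats 1000000

private lemma sum_support_one {K : ℕ} {i : Fin K} (g : Fin K → ℝ)
    (h : ∀ k, k ≠ i → g k = 0) : ∑ k, g k = g i :=
  Finset.sum_eq_single i (fun k _ hk => h k hk) (fun hi => absurd (Finset.mem_univ i) hi)

private lemma sum_support_pair {K : ℕ} {i j : Fin K} (hij : i ≠ j) (g : Fin K → ℝ)
    (h : ∀ k, k ≠ i → k ≠ j → g k = 0) : ∑ k, g k = g i + g j := by
  have hsub : ∑ k ∈ ({i, j} : Finset (Fin K)), g k = ∑ k, g k :=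
    Finset.sum_subset (Finset.subset_univ _) (by
      intro x _ hx
      simp only [Finset.mem_insert, Finset.mem_singleton, not_or] at hx
      exact h x hx.1 hx.2)
  rw [← hsub, Finset.sum_pair hij]

private lemma sum_support_three {K : ℕ} {i j l : Fin K} (hij : i ≠ j) (hil : i ≠ l)
    (hjl : j ≠ l) (g : Fin K → ℝ)
    (h : ∀ k, k ≠ i → k ≠ j → k ≠ l → g k = 0) : ∑ k, g k = g i + g j + g l := by
  have hsub : ∑ k ∈ ({i, j, l} : Finset (Fin K)), g k = ∑ k, g k :=
    Finset.sum_subset (Finset.subset_univ _) (by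
      intro x _ hx
      simp only [Finset.mem_insert, Finset.mem_singleton, not_or] at hx
      exact h x hx.1 hx.2.1 hx.2.2)
  rw [← hsub, Finset.sum_insert (by simp [hij, hil]), Finset.sum_pair hjl, add_assoc]

private lemma reduce_support {K : ℕ} (α d c : Fin K → ℝ) (b : ℝ)
    (i j l : Fin K) (hij : i ≠ j) (hil : i ≠ l) (hjl : j ≠ l)
    (hi : 0 < α i) (hj : 0 < α j) (hl : 0 < α l)
    (x y z : ℝ) (hsum0 : x + y + z = 0)
    (hd0 : x * d i + y * d j + z * d l = 0)
    (hnz : x ≠ 0 ∨ y ≠ 0 ∨ z ≠ 0)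
    (hc0 : 0 ≤ x * c i + y * c j + z * c l)
    (hα : ∀ k, 0 ≤ α k) (hα1 : ∑ k, α k = 1) (hαd : ∑ k, α k * d k ≤ b) :
    ∃ α' : Fin K → ℝ, (∀ k, 0 ≤ α' k) ∧ ∑ k, α' k = 1 ∧ ∑ k, α' k * d k ≤ b ∧
      ∑ k, α k * c k ≤ ∑ k, α' k * c k ∧
      (Finset.univ.filter fun k => 0 < α' k).card < (Finset.univ.filter fun k => 0 < α k).card := by
  classical
  set u : Fin K → ℝ := fun k => if k = i then x else if k = j then y else if k = l then z else 0
    with hu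
  have hu_supp : ∀ k, u k ≠ 0 → 0 < α k := by
    intro k hk
    by_cases h1 : k = i; · exact h1 ▸ hi
    by_cases h2 : k = j; · exact h2 ▸ hj
    by_cases h3 : k = l; · exact h3 ▸ hl
    simp [hu, h1, h2, h3] at hk
  have husum : ∀ f : Fin K → ℝ, ∑ k, u k * f k = x * f i + y * f j + z * f l := by
    intro f
    rw [sum_support_three hij hil hjl (fun k => u k * f k) (by
      intro k h1 h2 h3; simp [hu, h1, h2, h3])]
    simp [hu, hij.symm, hil.symm, hjl.symm, hij, hil, hjl]
  have hneg : ∃ k, u k < 0 := by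
    by_contra h
    push_neg at h
    have hzero : ∑ k, u k = 0 := by
      have := husum (fun _ => 1); simpa [hsum0] using this
    have hall : ∀ k ∈ Finset.univ, u k = 0 :=
      (Finset.sum_eq_zero_iff_of_nonneg (fun k _ => h k)).1 hzero
    have hx : u i = x := by simp [hu]
    have hy : u j = y := by simp [hu, hij.symm]
    have hz : u l = z := by simp [hu, hil.symm, hjl.symm]
    rcases hnz with h' | h' | h'
    · exact h' (hx ▸ hall i (Finset.mem_univ i))
    · exact h' (hy ▸ hall j (Finset.mem_univ j))
    · exact h' (hz ▸ hall l (Finset.mem_univ l))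
  set N : Finset (Fin K) := Finset.univ.filter fun k => u k < 0 with hN
  have hNne : N.Nonempty := by
    obtain ⟨k, hk⟩ := hneg
    exact ⟨k, by simp [hN, hk]⟩
  obtain ⟨k₀, hk₀N, hk₀min⟩ := N.exists_min_image (fun k => α k / (-u k)) hNne
  have hu0 : u k₀ < 0 := by simpa [hN] using hk₀N
  have hαk₀ : 0 < α k₀ := hu_supp k₀ (ne_of_lt hu0)
  set s : ℝ := α k₀ / (-u k₀) with hs
  have hspos : 0 < s := div_pos hαk₀ (neg_pos.2 hu0)
  set α' : Fin K → ℝ := fun k => α k + s * u k with hα'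
  have hα'nonneg : ∀ k, 0 ≤ α' k := by
    intro k
    rcases lt_or_ge (u k) 0 with hk | hk
    · have hkN : k ∈ N := by simp [hN, hk]
      have := hk₀min k hkN
      have h2 : s * (-u k) ≤ α k := (le_div_iff₀ (neg_pos.2 hk)).1 this
      simp only [hα']
      linarith
    · exact add_nonneg (hα k) (mul_nonneg hspos.le hk)
  have hsum' : ∀ f : Fin K → ℝ,
      ∑ k, α' k * f k = ∑ k, α k * f k + s * (x * f i + y * f j + z * f l) := by
    intro f
    calc ∑ k, α' k * f k = ∑ k, (α k * f k + s * (u k * f k)) := by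
          apply Finset.sum_congr rfl; intro k _; simp only [hα']; ring
      _ = ∑ k, α k * f k + s * ∑ k, u k * f k := by
          rw [Finset.sum_add_distrib, Finset.mul_sum]
      _ = _ := by rw [husum]
  have h1 : ∑ k, α' k = 1 := by
    have := hsum' (fun _ => 1)
    simp only [mul_one] at this
    rw [this, hα1, hsum0, mul_zero, add_zero]
  have hd' : ∑ k, α' k * d k ≤ b := by
    rw [hsum' d, hd0, mul_zero, add_zero]; exact hαd
  have hc' : ∑ k, α k * c k ≤ ∑ k, α' k * c k := by
    rw [hsum' c]
    nlinarith [mul_nonneg hspos.le hc0]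
  have hk₀zero : α' k₀ = 0 := by
    have hne : u k₀ ≠ 0 := ne_of_lt hu0
    have hne' : -u k₀ ≠ 0 := neg_ne_zero.2 hne
    simp only [hα', hs]
    field_simp
    ring
  have hsubset : (Finset.univ.filter fun k => 0 < α' k) ⊆ (Finset.univ.filter fun k => 0 < α k) := by
    intro k hk
    simp only [Finset.mem_filter, Finset.mem_univ, true_and] at hk ⊢
    by_contra hαk
    have hαk0 : α k = 0 := le_antisymm (not_lt.1 hαk) (hα k)
    have huk : u k = 0 := by
      by_contra h
      exact hαk ((hαk0 ▸ hu_supp k h))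
    simp [hα', hαk0, huk] at hk
  have hssub : (Finset.univ.filter fun k => 0 < α' k) ⊂ (Finset.univ.filter fun k => 0 < α k) := by
    refine ⟨hsubset, fun h => ?_⟩
    have : k₀ ∈ Finset.univ.filter fun k => 0 < α' k :=
      h (by simp [hαk₀])
    simp [hk₀zero] at this
  exact ⟨α', hα'nonneg, h1, hd', hc', Finset.card_lt_card hssub⟩

private lemma exchange_base {K : ℕ} (hK : 2 ≤ K) (d c : Fin K → ℝ) (b : ℝ)
    (α : Fin K → ℝ)
    (hcard : (Finset.univ.filter fun k => 0 < α k).card ≤ 2)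
    (hα : ∀ k, 0 ≤ α k) (hα1 : ∑ k, α k = 1) (hαd : ∑ k, α k * d k ≤ b) :
    ∃ i j : Fin K, i ≠ j ∧ ∃ β₁ β₂ : ℝ, 0 ≤ β₁ ∧ 0 ≤ β₂ ∧ β₁ + β₂ = 1 ∧
      β₁ * d i + β₂ * d j ≤ b ∧ ∑ k, α k * c k ≤ β₁ * c i + β₂ * c j := by
  classical
  set S := Finset.univ.filter fun k => 0 < α k with hS
  have hzero : ∀ k, k ∉ S → α k = 0 := by
    intro k hk
    simp only [hS, Finset.mem_filter, Finset.mem_univ, true_and, not_lt] at hk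
    exact le_antisymm hk (hα k)
  have hSne : S.Nonempty := by
    by_contra h
    rw [Finset.not_nonempty_iff_eq_empty] at h
    have : ∑ k, α k = 0 := Finset.sum_eq_zero (fun k _ => hzero k (by simp [h]))
    rw [hα1] at this; norm_num at this
  have h1le : 1 ≤ S.card := Finset.card_pos.2 hSne
  interval_cases h : S.card
  · -- card = 1
    obtain ⟨i, hi⟩ := Finset.card_eq_one.1 h
    have hoff : ∀ k, k ≠ i → α k = 0 := fun k hk => hzero k (by simp [hi, hk])
    have hαi : α i = 1 := by
      rw [← hα1, sum_support_one α hoff]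
    set i0 : Fin K := ⟨0, by omega⟩ with hi0
    set i1 : Fin K := ⟨1, by omega⟩ with hi1
    have hne01 : i0 ≠ i1 := by simp [hi0, hi1, Fin.ext_iff]
    set j : Fin K := if i = i0 then i1 else i0 with hj
    have hij : i ≠ j := by
      by_cases h' : i = i0
      · simp [hj, h']; exact h' ▸ hne01
      · simp [hj, h']
    refine ⟨i, j, hij, 1, 0, zero_le_one, le_refl 0, by ring, ?_, ?_⟩
    · have : ∑ k, α k * d k = α i * d i :=
        sum_support_one (fun k => α k * d k) (fun k hk => by simp [hoff k hk])
      rw [this, hαi] at hαd; linarith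
    · have : ∑ k, α k * c k = α i * c i :=
        sum_support_one (fun k => α k * c k) (fun k hk => by simp [hoff k hk])
      rw [this, hαi]; ring_nf; exact le_refl _
  · -- card = 2
    obtain ⟨i, j, hij, hijS⟩ := Finset.card_eq_two.1 h
    have hoff : ∀ k, k ≠ i → k ≠ j → α k = 0 := fun k h1 h2 =>
      hzero k (by simp [hijS, h1, h2])
    have hsum2 : α i + α j = 1 := by
      rw [← hα1, sum_support_pair hij α hoff]
    refine ⟨i, j, hij, α i, α j, hα i, hα j, hsum2, ?_, ?_⟩
    · have : ∑ k, α k * d k = α i * d i + α j * d j :=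
        sum_support_pair hij (fun k => α k * d k)
          (fun k h1 h2 => by simp [hoff k h1 h2])
      linarith [this ▸ hαd]
    · have : ∑ k, α k * c k = α i * c i + α j * c j :=
        sum_support_pair hij (fun k => α k * c k)
          (fun k h1 h2 => by simp [hoff k h1 h2])
      rw [this]

private lemma exchange {K : ℕ} (hK : 2 ≤ K) (d c : Fin K → ℝ) (b : ℝ) :
    ∀ n : ℕ, ∀ α : Fin K → ℝ,
      (Finset.univ.filter fun k => 0 < α k).card ≤ n →
      (∀ k, 0 ≤ α k) → ∑ k, α k = 1 → ∑ k, α k * d k ≤ b →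
      ∃ i j : Fin K, i ≠ j ∧ ∃ β₁ β₂ : ℝ, 0 ≤ β₁ ∧ 0 ≤ β₂ ∧ β₁ + β₂ = 1 ∧
        β₁ * d i + β₂ * d j ≤ b ∧ ∑ k, α k * c k ≤ β₁ * c i + β₂ * c j := by
  intro n
  induction n with
  | zero =>
    intro α hcard hα hα1 hαd
    exact exchange_base hK d c b α (le_trans hcard (by norm_num)) hα hα1 hαd
  | succ n ih =>
    intro α hcard hα hα1 hαd
    classical
    set S := Finset.univ.filter fun k => 0 < α k with hS
    rcases le_or_gt S.card 2 with hsmall | hbig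
    · exact exchange_base hK d c b α hsmall hα hα1 hαd
    · -- card ≥ 3 : find three distinct support elements
      obtain ⟨i, hiS⟩ := Finset.card_pos.1 (by omega : 0 < S.card)
      have hcard2 : 0 < (S.erase i).card := by
        rw [Finset.card_erase_of_mem hiS]; omega
      obtain ⟨j, hjS⟩ := Finset.card_pos.1 hcard2
      have hji : j ≠ i := (Finset.mem_erase.1 hjS).1
      have hjS' : j ∈ S := (Finset.mem_erase.1 hjS).2
      have hcard3 : 0 < ((S.erase i).erase j).card := by
        rw [Finset.card_erase_of_mem hjS, Finset.card_erase_of_mem hiS]; omega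
      obtain ⟨l, hlS⟩ := Finset.card_pos.1 hcard3
      have hlj : l ≠ j := (Finset.mem_erase.1 hlS).1
      have hli : l ≠ i := (Finset.mem_erase.1 (Finset.mem_erase.1 hlS).2).1
      have hlS' : l ∈ S := (Finset.mem_erase.1 (Finset.mem_erase.1 hlS).2).2
      have hi : 0 < α i := by simpa [hS] using hiS
      have hj : 0 < α j := by simpa [hS] using hjS'
      have hl : 0 < α l := by simpa [hS] using hlS'
      have hij : i ≠ j := hji.symm
      have hil : i ≠ l := hli.symm
      have hjl : j ≠ l := hlj.symm
      -- choose the direction (x, y, z)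
      have hstep : ∃ α' : Fin K → ℝ, (∀ k, 0 ≤ α' k) ∧ ∑ k, α' k = 1 ∧
          ∑ k, α' k * d k ≤ b ∧ ∑ k, α k * c k ≤ ∑ k, α' k * c k ∧
          (Finset.univ.filter fun k => 0 < α' k).card <
            (Finset.univ.filter fun k => 0 < α k).card := by
        by_cases hdd : d i = d j
        · rcases le_total (c j) (c i) with hcc | hcc
          · exact reduce_support α d c b i j l hij hil hjl hi hj hl 1 (-1) 0
              (by ring) (by linarith) (Or.inl one_ne_zero) (by linarith) hα hα1 hαd
          · exact reduce_support α d c b i j l hij hil hjl hi hj hl (-1) 1 0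
              (by ring) (by linarith) (Or.inr (Or.inl one_ne_zero)) (by linarith) hα hα1 hαd
        · have hz : d i - d j ≠ 0 := sub_ne_zero.2 hdd
          rcases le_total 0 ((d j - d l) * c i + (d l - d i) * c j + (d i - d j) * c l)
            with hcc | hcc
          · exact reduce_support α d c b i j l hij hil hjl hi hj hl
              (d j - d l) (d l - d i) (d i - d j)
              (by ring) (by ring) (Or.inr (Or.inr hz)) hcc hα hα1 hαd
          · exact reduce_support α d c b i j l hij hil hjl hi hj hl
              (-(d j - d l)) (-(d l - d i)) (-(d i - d j))
              (by ring) (by ring) (Or.inr (Or.inr (neg_ne_zero.2 hz))) (by linarith)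
              hα hα1 hαd
      obtain ⟨α', hα'0, hα'1, hα'd, hα'c, hα'card⟩ := hstep
      have hcard' : (Finset.univ.filter fun k => 0 < α' k).card ≤ n := by
        have := hα'card
        rw [← hS] at this
        omega
      obtain ⟨i', j', hij', β₁, β₂, h0, h1, h2, h3, h4⟩ := ih α' hcard' hα'0 hα'1 hα'd
      exact ⟨i', j', hij', β₁, β₂, h0, h1, h2, h3, le_trans hα'c h4⟩

/-- **Two-piece decomposition of the per-sample subproblem** (Lemma 11).  Under the
piecewise-concavity, Lipschitz and sublinear-growth assumptions, the `K`-piece subproblem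
`S_i^{new}(b)` equals the maximum over all pairs `k₁ < k₂` of the two-piece subproblems. -/
theorem Snew_eq_max_pairs
    {m K : ℕ} (hK : 2 ≤ K)
    (ℓ : Vec m → ℝ) (ℓk : Fin K → Vec m → ℝ)
    (hpiece : ∀ ξ, ℓ ξ = ⨆ k, ℓk k ξ)
    (hconc : ∀ k, ConcaveOn ℝ Set.univ (ℓk k))
    (hdiff : ∀ k, Differentiable ℝ (ℓk k))
    (hlip : ∃ L : ℝ≥0, LipschitzWith L ℓ)
    (hgrowth : ∃ g > (0:ℝ), ∃ r ∈ Set.Ioo (0:ℝ) 1, ∀ ξ, ℓ ξ ≤ g * (1 + ‖ξ‖ ^ r))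
    (ξhat : Vec m) (b : ℝ) (hb : 0 ≤ b) :
    Snew ℓk ξhat b
      = sSup {v | ∃ k₁ k₂ : Fin K, k₁ < k₂ ∧ v = SnewPair (ℓk k₁) (ℓk k₂) ξhat b} := by
  classical
  obtain ⟨L, hL⟩ := hlip
  -- abbreviations
  set A : Set ℝ := {v | ∃ (α : Fin K → ℝ) (w : Fin K → Vec m),
    (∀ k, 0 ≤ α k) ∧ ∑ k, α k = 1 ∧ ∑ k, α k * ‖w k‖ ≤ b ∧
    v = ∑ k, α k * ℓk k (ξhat - w k)} with hA
  set P : Fin K → Fin K → Set ℝ := fun k₁ k₂ => {v | ∃ (α₁ α₂ : ℝ) (w₁ w₂ : Vec m),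
    0 ≤ α₁ ∧ 0 ≤ α₂ ∧ α₁ + α₂ = 1 ∧ α₁ * ‖w₁‖ + α₂ * ‖w₂‖ ≤ b ∧
    v = α₁ * ℓk k₁ (ξhat - w₁) + α₂ * ℓk k₂ (ξhat - w₂)} with hP
  set Big : Set ℝ := {v | ∃ k₁ k₂ : Fin K, k₁ < k₂ ∧ v = SnewPair (ℓk k₁) (ℓk k₂) ξhat b}
    with hBig
  have hSnew : Snew ℓk ξhat b = sSup A := rfl
  have hSP : ∀ k₁ k₂, SnewPair (ℓk k₁) (ℓk k₂) ξhat b = sSup (P k₁ k₂) := fun _ _ => rfl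
  -- pointwise bound ℓk k x ≤ ℓ x
  have hub : ∀ (k : Fin K) (x : Vec m), ℓk k x ≤ ℓ x := by
    intro k x
    rw [hpiece x]
    exact le_ciSup (Set.Finite.bddAbove (Set.finite_range (fun k => ℓk k x))) k
  -- Lipschitz upper bound
  have hlipb : ∀ w : Vec m, ℓ (ξhat - w) ≤ ℓ ξhat + L * ‖w‖ := by
    intro w
    have h1 := hL.dist_le_mul (ξhat - w) ξhat
    rw [Real.dist_eq, dist_eq_norm] at h1
    have h2 : ξhat - w - ξhat = -w := by abel
    rw [h2, norm_neg] at h1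
    have := abs_le.1 h1
    linarith [this.2]
  -- upper bound on A
  have hAub : ∀ v ∈ A, v ≤ ℓ ξhat + L * b := by
    rintro v ⟨α, w, hα, hα1, hbud, rfl⟩
    have step1 : ∑ k, α k * ℓk k (ξhat - w k) ≤ ∑ k, α k * (ℓ ξhat + L * ‖w k‖) :=
      Finset.sum_le_sum (fun k _ => mul_le_mul_of_nonneg_left
        (le_trans (hub k _) (hlipb (w k))) (hα k))
    have step2 : ∑ k, α k * (ℓ ξhat + L * ‖w k‖)
        = (∑ k, α k) * ℓ ξhat + L * ∑ k, α k * ‖w k‖ := by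
      rw [Finset.sum_mul, Finset.mul_sum, ← Finset.sum_add_distrib]
      exact Finset.sum_congr rfl (fun k _ => by ring)
    have step3 : (L : ℝ) * ∑ k, α k * ‖w k‖ ≤ L * b :=
      mul_le_mul_of_nonneg_left hbud L.2
    calc ∑ k, α k * ℓk k (ξhat - w k) ≤ _ := step1
      _ = _ := step2
      _ ≤ ℓ ξhat + L * b := by rw [hα1, one_mul]; linarith
  have hAbdd : BddAbove A := ⟨ℓ ξhat + L * b, hAub⟩
  -- A is nonempty
  set i0 : Fin K := ⟨0, by omega⟩ with hi0
  set i1 : Fin K := ⟨1, by omega⟩ with hi1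
  have hne01 : i0 ≠ i1 := by simp [hi0, hi1, Fin.ext_iff]
  have hlt01 : i0 < i1 := by simp [hi0, hi1, Fin.mk_lt_mk]
  -- pair sets included in A
  have hPsub : ∀ k₁ k₂ : Fin K, k₁ ≠ k₂ → P k₁ k₂ ⊆ A := by
    intro k₁ k₂ hne v hv
    obtain ⟨α₁, α₂, w₁, w₂, h1, h2, h3, h4, rfl⟩ := hv
    refine ⟨fun k => if k = k₁ then α₁ else if k = k₂ then α₂ else 0,
      fun k => if k = k₁ then w₁ else w₂, ?_, ?_, ?_, ?_⟩
    · intro k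
      by_cases e1 : k = k₁ <;> by_cases e2 : k = k₂ <;>
        simp [e1, e2, h1, h2, Ne.symm hne]
    · rw [sum_support_pair hne _ (fun k e1 e2 => by simp [e1, e2])]
      simp [hne.symm, h3]
    · rw [sum_support_pair hne _ (fun k e1 e2 => by simp [e1, e2])]
      simpa [Ne.symm hne] using h4
    · rw [sum_support_pair hne _ (fun k e1 e2 => by simp [e1, e2])]
      simp [Ne.symm hne]
  -- each pair set is nonempty
  have hPne : ∀ k₁ k₂ : Fin K, (P k₁ k₂).Nonempty := by
    intro k₁ k₂
    exact ⟨_, 1, 0, 0, 0, zero_le_one, le_refl 0, by ring, by simp [hb], rfl⟩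
  have hAne : A.Nonempty := by
    obtain ⟨v, hv⟩ := hPne i0 i1
    exact ⟨v, hPsub i0 i1 hne01 hv⟩
  -- Big is finite, hence bdd above; nonempty
  have hBigfin : Big.Finite := by
    apply Set.Finite.subset (Set.finite_range
      (fun p : Fin K × Fin K => SnewPair (ℓk p.1) (ℓk p.2) ξhat b))
    rintro v ⟨k₁, k₂, _, rfl⟩
    exact ⟨(k₁, k₂), rfl⟩
  have hBigbdd : BddAbove Big := hBigfin.bddAbove
  have hBigne : Big.Nonempty := ⟨_, i0, i1, hlt01, rfl⟩
  -- SnewPair ≤ Snew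
  have hPle : ∀ k₁ k₂ : Fin K, k₁ ≠ k₂ → SnewPair (ℓk k₁) (ℓk k₂) ξhat b ≤ sSup A := by
    intro k₁ k₂ hne
    rw [hSP]
    exact csSup_le_csSup hAbdd (hPne k₁ k₂) (hPsub k₁ k₂ hne)
  rw [hSnew]
  apply le_antisymm
  · -- Snew ≤ sup of pairs
    apply csSup_le hAne
    rintro v ⟨α, w, hα, hα1, hbud, rfl⟩
    obtain ⟨i, j, hij, β₁, β₂, h0, h1, h2, h3, h4⟩ :=
      exchange hK (fun k => ‖w k‖) (fun k => ℓk k (ξhat - w k)) b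
        (Finset.univ.filter fun k => 0 < α k).card α (le_refl _) hα hα1 hbud
    -- the value β₁ * c i + β₂ * c j belongs to a pair set
    rcases lt_or_gt_of_ne hij with hlt | hgt
    · have hmem : β₁ * ℓk i (ξhat - w i) + β₂ * ℓk j (ξhat - w j) ∈ P i j :=
        ⟨β₁, β₂, w i, w j, h0, h1, h2, h3, rfl⟩
      have hble : β₁ * ℓk i (ξhat - w i) + β₂ * ℓk j (ξhat - w j)
          ≤ SnewPair (ℓk i) (ℓk j) ξhat b := by
        rw [hSP]
        exact le_csSup (BddAbove.mono (hPsub i j hij) hAbdd) hmem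
      calc ∑ k, α k * ℓk k (ξhat - w k) ≤ _ := h4
        _ ≤ SnewPair (ℓk i) (ℓk j) ξhat b := hble
        _ ≤ sSup Big := le_csSup hBigbdd ⟨i, j, hlt, rfl⟩
    · have hmem : β₂ * ℓk j (ξhat - w j) + β₁ * ℓk i (ξhat - w i) ∈ P j i :=
        ⟨β₂, β₁, w j, w i, h1, h0, by linarith, by linarith, rfl⟩
      have hble : β₂ * ℓk j (ξhat - w j) + β₁ * ℓk i (ξhat - w i)
          ≤ SnewPair (ℓk j) (ℓk i) ξhat b := by
        rw [hSP]
        exact le_csSup (BddAbove.mono (hPsub j i hij.symm) hAbdd) hmem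
      calc ∑ k, α k * ℓk k (ξhat - w k) ≤ β₁ * ℓk i (ξhat - w i) + β₂ * ℓk j (ξhat - w j) := h4
        _ = β₂ * ℓk j (ξhat - w j) + β₁ * ℓk i (ξhat - w i) := by ring
        _ ≤ SnewPair (ℓk j) (ℓk i) ξhat b := hble
        _ ≤ sSup Big := le_csSup hBigbdd ⟨j, i, hgt, rfl⟩
  · -- sup of pairs ≤ Snew
    apply csSup_le hBigne
    rintro v ⟨k₁, k₂, hlt, rfl⟩
    exact hPle k₁ k₂ (ne_of_lt hlt)
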